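/- Let X_1, ..., X_n be discrete, independent random variables with E[X_i] = 0 and |X_i| ≤ C, Y = Σ X_i, σ = sqrt(Var(Y)) > 0, and 0 < δ < 1. If σ/C < (1/e)·sqrt(2e·ln(2/δ)), then with λ = (2C/σ)·ln(2/δ) we have P(|Y| ≥ λσ) ≤ δ. -/

import Mathlib

open MeasureTheory ProbabilityTheory Real

section Aux
open Set

lemma exp_quad_bound {a u : ℝ} (hu : |u| ≤ a) :
    Real.exp u ≤ 1 + u + u ^ 2 * Real.exp a / 2 := by
  have ha : 0 ≤ a := le_trans (abs_nonneg u) hu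
  set E := Real.exp a with hE
  have hg : ∀ x : ℝ, HasDerivAt (fun u : ℝ => 1 + u * E - Real.exp u) (E - Real.exp x) x := by
    intro x
    have h1 : HasDerivAt (fun u : ℝ => 1 + u * E - Real.exp u) (0 + 1 * E - Real.exp x) x :=
      ((hasDerivAt_const x (1:ℝ)).add ((hasDerivAt_id x).mul_const E)).sub (Real.hasDerivAt_exp x)
    convert h1 using 1; ring
  have hf : ∀ x : ℝ, HasDerivAt (fun u : ℝ => 1 + u + u ^ 2 * E / 2 - Real.exp u)
      (1 + x * E - Real.exp x) x := by
    intro x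
    have h1 := (((hasDerivAt_const x (1:ℝ)).add (hasDerivAt_id x)).add
        ((hasDerivAt_pow 2 x).mul_const (E / 2))).sub (Real.hasDerivAt_exp x)
    have h2 : (fun u : ℝ => 1 + u + u ^ 2 * E / 2 - Real.exp u)
        = (fun u : ℝ => 1 + id u + u ^ 2 * (E / 2) - Real.exp u) := by
      funext u; simp [mul_div_assoc]
    rw [h2]; exact h1.congr_deriv (by rw [show (2:ℕ) - 1 = 1 from rfl]; push_cast; ring)
  have hgmono : MonotoneOn (fun u : ℝ => 1 + u * E - Real.exp u) (Iic a) := by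
    apply monotoneOn_of_deriv_nonneg (convex_Iic a)
    · fun_prop
    · intro x _
      exact (hg x).differentiableAt.differentiableWithinAt
    · intro x hx
      rw [(hg x).deriv]
      rw [interior_Iic] at hx
      have : Real.exp x ≤ E := Real.exp_le_exp.2 (le_of_lt hx)
      linarith
  have hgpos : ∀ x ∈ Icc (0:ℝ) a, 0 ≤ 1 + x * E - Real.exp x := by
    intro x hx
    have h := hgmono (mem_Iic.2 (le_trans (le_refl 0) ha) : (0:ℝ) ∈ Iic a) (mem_Iic.2 hx.2) hx.1
    simpa using h
  have hgneg : ∀ x ∈ Icc (-a) (0:ℝ), 1 + x * E - Real.exp x ≤ 0 := by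
    intro x hx
    have h := hgmono (mem_Iic.2 (hx.2.trans ha)) (mem_Iic.2 ha) hx.2
    simpa using h
  have hfmono : MonotoneOn (fun u : ℝ => 1 + u + u ^ 2 * E / 2 - Real.exp u) (Icc 0 a) := by
    apply monotoneOn_of_deriv_nonneg (convex_Icc 0 a)
    · fun_prop
    · intro x _
      exact (hf x).differentiableAt.differentiableWithinAt
    · intro x hx
      rw [(hf x).deriv]
      rw [interior_Icc] at hx
      exact hgpos x ⟨hx.1.le, hx.2.le⟩
  have hfanti : AntitoneOn (fun u : ℝ => 1 + u + u ^ 2 * E / 2 - Real.exp u) (Icc (-a) 0) := by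
    apply antitoneOn_of_deriv_nonpos (convex_Icc (-a) 0)
    · fun_prop
    · intro x _
      exact (hf x).differentiableAt.differentiableWithinAt
    · intro x hx
      rw [(hf x).deriv]
      rw [interior_Icc] at hx
      exact hgneg x ⟨hx.1.le, hx.2.le⟩
  have hu1 : -a ≤ u := neg_le_of_abs_le hu
  have hu2 : u ≤ a := le_of_abs_le hu
  rcases le_total 0 u with h | h
  · have := hfmono (mem_Icc.2 ⟨le_refl 0, ha⟩) (mem_Icc.2 ⟨h, hu2⟩) h
    simp only at this
    nlinarith [this, Real.exp_zero]
  · have := hfanti (mem_Icc.2 ⟨hu1, h⟩) (mem_Icc.2 ⟨neg_nonpos.2 ha, le_refl 0⟩) h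
    simp only at this
    nlinarith [this, Real.exp_zero]

end Aux

lemma tail_bound {Ω : Type*} [MeasurableSpace Ω] (μ : Measure Ω) [IsProbabilityMeasure μ]
    (n : ℕ) (X : Fin n → Ω → ℝ) (hmeas : ∀ i, Measurable (X i))
    (hindep : iIndepFun X μ)
    (C : ℝ) (hC : 0 < C) (hbd : ∀ i, ∀ᵐ ω ∂μ, |X i ω| ≤ C)
    (hmean : ∀ i, ∫ ω, X i ω ∂μ = 0)
    (t ε : ℝ) (ht : 0 ≤ t) :
    (μ {ω | ε ≤ ∑ i, X i ω}).toReal ≤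
      Real.exp (-t * ε + t ^ 2 * Real.exp (t * C) * (∑ i, ∫ ω, (X i ω) ^ 2 ∂μ) / 2) := by
  set E := Real.exp (t * C) with hE
  -- integrability facts
  have h_int : ∀ i, Integrable (fun ω => Real.exp (t * X i ω)) μ := by
    intro i
    refine Integrable.mono' (integrable_const E) (((hmeas i).const_mul t).exp.aestronglyMeasurable) ?_
    filter_upwards [hbd i] with ω hω
    rw [Real.norm_eq_abs, abs_of_pos (Real.exp_pos _)]
    apply Real.exp_le_exp.2
    calc t * X i ω ≤ |t * X i ω| := le_abs_self _
      _ = t * |X i ω| := by rw [abs_mul, abs_of_nonneg ht]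
      _ ≤ t * C := by exact mul_le_mul_of_nonneg_left hω ht
  have hXint : ∀ i, Integrable (X i) μ := by
    intro i
    refine Integrable.mono' (integrable_const C) (hmeas i).aestronglyMeasurable ?_
    filter_upwards [hbd i] with ω hω
    simpa using hω
  have hX2int : ∀ i, Integrable (fun ω => (X i ω) ^ 2) μ := by
    intro i
    refine Integrable.mono' (integrable_const (C ^ 2)) ((hmeas i).pow_const 2).aestronglyMeasurable ?_
    filter_upwards [hbd i] with ω hω
    rw [Real.norm_eq_abs, abs_pow]
    exact pow_le_pow_left₀ (abs_nonneg _) hω 2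
  -- per-variable mgf bound
  have hmgf_i : ∀ i, mgf (X i) μ t ≤ Real.exp (t ^ 2 * E * (∫ ω, (X i ω) ^ 2 ∂μ) / 2) := by
    intro i
    have hptwise : ∀ᵐ ω ∂μ, Real.exp (t * X i ω) ≤
        1 + t * X i ω + (t ^ 2 * E / 2) * (X i ω) ^ 2 := by
      filter_upwards [hbd i] with ω hω
      have habs : |t * X i ω| ≤ t * C := by
        rw [abs_mul, abs_of_nonneg ht]
        exact mul_le_mul_of_nonneg_left hω ht
      have := exp_quad_bound habs
      calc Real.exp (t * X i ω) ≤ 1 + t * X i ω + (t * X i ω) ^ 2 * E / 2 := this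
        _ = 1 + t * X i ω + (t ^ 2 * E / 2) * (X i ω) ^ 2 := by ring
    have hRHSint : Integrable (fun ω => 1 + t * X i ω + (t ^ 2 * E / 2) * (X i ω) ^ 2) μ :=
      ((integrable_const 1).add ((hXint i).const_mul t)).add ((hX2int i).const_mul _)
    have h1 : mgf (X i) μ t ≤ ∫ ω, (1 + t * X i ω + (t ^ 2 * E / 2) * (X i ω) ^ 2) ∂μ :=
      integral_mono_ae (h_int i) hRHSint hptwise
    have i1 : Integrable (fun ω => 1 + t * X i ω) μ :=
      (integrable_const 1).add ((hXint i).const_mul t)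
    have i2 : Integrable (fun ω => (t ^ 2 * E / 2) * (X i ω) ^ 2) μ := (hX2int i).const_mul _
    have i3 : Integrable (fun ω => t * X i ω) μ := (hXint i).const_mul t
    have h2 : ∫ ω, (1 + t * X i ω + (t ^ 2 * E / 2) * (X i ω) ^ 2) ∂μ
        = 1 + t ^ 2 * E * (∫ ω, (X i ω) ^ 2 ∂μ) / 2 := by
      rw [integral_add i1 i2, integral_add (integrable_const 1) i3,
        integral_const, integral_const_mul, integral_const_mul, hmean i]
      simp
      ring
    rw [h2] at h1
    refine h1.trans ?_
    have := Real.add_one_le_exp (t ^ 2 * E * (∫ ω, (X i ω) ^ 2 ∂μ) / 2)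
    linarith
  -- mgf of the sum
  have hmgf_sum : mgf (∑ i, X i) μ t ≤ Real.exp (t ^ 2 * E * (∑ i, ∫ ω, (X i ω) ^ 2 ∂μ) / 2) := by
    rw [hindep.mgf_sum hmeas Finset.univ]
    calc ∏ i, mgf (X i) μ t ≤ ∏ i, Real.exp (t ^ 2 * E * (∫ ω, (X i ω) ^ 2 ∂μ) / 2) :=
          Finset.prod_le_prod (fun i _ => mgf_nonneg) (fun i _ => hmgf_i i)
      _ = Real.exp (∑ i, t ^ 2 * E * (∫ ω, (X i ω) ^ 2 ∂μ) / 2) := by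
          rw [Real.exp_sum]
      _ = Real.exp (t ^ 2 * E * (∑ i, ∫ ω, (X i ω) ^ 2 ∂μ) / 2) := by
          congr 1
          rw [Finset.mul_sum, Finset.sum_div]
  -- Chernoff
  have h_int_sum : Integrable (fun ω => Real.exp (t * (∑ i, X i) ω)) μ :=
    hindep.integrable_exp_mul_sum hmeas (fun i _ => h_int i)
  have hch := measure_ge_le_exp_mul_mgf (X := ∑ i, X i) (μ := μ) ε ht h_int_sum
  have hset : {ω | ε ≤ ∑ i, X i ω} = {ω | ε ≤ (∑ i, X i) ω} := by
    ext ω; simp [Finset.sum_apply]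
  rw [hset]
  refine hch.trans ?_
  calc Real.exp (-t * ε) * mgf (∑ i, X i) μ t
      ≤ Real.exp (-t * ε) * Real.exp (t ^ 2 * E * (∑ i, ∫ ω, (X i ω) ^ 2 ∂μ) / 2) := by
        exact mul_le_mul_of_nonneg_left hmgf_sum (le_of_lt (Real.exp_pos _))
    _ = Real.exp (-t * ε + t ^ 2 * E * (∑ i, ∫ ω, (X i ω) ^ 2 ∂μ) / 2) := (Real.exp_add _ _).symm

theorem stmt9 {Ω : Type*} [MeasurableSpace Ω] (μ : Measure Ω) [IsProbabilityMeasure μ]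
    (n : ℕ) (X : Fin n → Ω → ℝ) (hmeas : ∀ i, Measurable (X i))
    (hfin : ∀ i, (Set.range (X i)).Finite)
    (hindep : iIndepFun X μ)
    (C : ℝ) (hC : 0 < C) (hbd : ∀ i, ∀ᵐ ω ∂μ, |X i ω| ≤ C)
    (hmean : ∀ i, ∫ ω, X i ω ∂μ = 0)
    (Y : Ω → ℝ) (hY : Y = fun ω => ∑ i, X i ω)
    (σ : ℝ) (hσ : σ = Real.sqrt (∑ i, ∫ ω, (X i ω) ^ 2 ∂μ)) (hσpos : 0 < σ)
    (δ : ℝ) (hδ0 : 0 < δ) (hδ1 : δ < 1)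
    (hcase : σ / C < (1 / Real.exp 1) * Real.sqrt (2 * Real.exp 1 * Real.log (2 / δ)))
    (lam : ℝ) (hlam : lam = (2 * C / σ) * Real.log (2 / δ)) :
    (μ {ω | lam * σ ≤ |Y ω|}).toReal ≤ δ := by
  have hσne : σ ≠ 0 := ne_of_gt hσpos
  have hCne : C ≠ 0 := ne_of_gt hC
  set L := Real.log (2 / δ) with hLdef
  have hL : 0 < L := Real.log_pos (by rw [lt_div_iff₀ hδ0]; linarith)
  set V := ∑ i, ∫ ω, (X i ω) ^ 2 ∂μ with hVdef
  have hVnonneg : 0 ≤ V := Finset.sum_nonneg fun i _ => integral_nonneg fun ω => sq_nonneg _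
  have hV : σ ^ 2 = V := by rw [hσ]; exact Real.sq_sqrt hVnonneg
  -- from hcase: exp 1 < 2 * C^2 * L / σ^2
  have he1 : (1:ℝ) < Real.exp 1 := by
    have := Real.add_one_le_exp 1; linarith
  set K := 2 * C ^ 2 * L / σ ^ 2 with hKdef
  have heK : Real.exp 1 < K := by
    have hsq : (σ / C) ^ 2 < ((1 / Real.exp 1) * Real.sqrt (2 * Real.exp 1 * L)) ^ 2 :=
      pow_lt_pow_left₀ hcase (by positivity) (by norm_num)
    have hrhs : ((1 / Real.exp 1) * Real.sqrt (2 * Real.exp 1 * L)) ^ 2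
        = 2 * L / Real.exp 1 := by
      rw [mul_pow, Real.sq_sqrt (by positivity), div_pow, one_pow]
      rw [div_mul_eq_mul_div, div_eq_div_iff (by positivity) (by positivity : Real.exp 1 ≠ 0)]
      ring
    rw [hrhs, div_pow] at hsq
    rw [hKdef, lt_div_iff₀ (by positivity)]
    rw [div_lt_div_iff₀ (by positivity) (Real.exp_pos 1)] at hsq
    linarith
  have hK1 : 1 ≤ K := le_of_lt (lt_trans he1 heK)
  have hKpos : 0 < K := lt_of_lt_of_le zero_lt_one hK1
  -- find a with a * exp a = K, 1 ≤ a
  obtain ⟨a, ha_mem, ha_eq⟩ : ∃ a ∈ Set.Icc (1:ℝ) K, a * Real.exp a = K := by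
    have hcont : ContinuousOn (fun x : ℝ => x * Real.exp x) (Set.Icc 1 K) := by fun_prop
    have h := intermediate_value_Icc hK1 hcont
    have hmem : K ∈ Set.Icc ((1:ℝ) * Real.exp 1) (K * Real.exp K) := by
      constructor
      · rw [one_mul]; exact le_of_lt heK
      · nlinarith [Real.one_le_exp (le_of_lt hKpos)]
    obtain ⟨a, ha, heq⟩ := h hmem
    exact ⟨a, ha, heq⟩
  have ha1 : 1 ≤ a := ha_mem.1
  have hapos : 0 < a := lt_of_lt_of_le zero_lt_one ha1
  have hane : a ≠ 0 := ne_of_gt hapos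
  -- exp a in terms of the rest
  have hea : Real.exp a = 2 * C ^ 2 * L / (σ ^ 2 * a) := by
    have h := ha_eq
    rw [hKdef, eq_div_iff (by positivity : (σ:ℝ) ^ 2 ≠ 0)] at h
    rw [eq_div_iff (by positivity : σ ^ 2 * a ≠ 0)]
    linear_combination h
  set t := a / C with htdef
  have ht : 0 ≤ t := by positivity
  have htC : t * C = a := by rw [htdef]; field_simp
  -- exponent value
  have hexpval : -t * (lam * σ) + t ^ 2 * Real.exp (t * C) * V / 2 = -(a * L) := by
    rw [htC, hea, ← hV, hlam, htdef]
    field_simp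
    ring
  have hhalf : Real.exp (-(a * L)) ≤ δ / 2 := by
    have h1 : Real.exp (-(a * L)) ≤ Real.exp (-L) := by
      apply Real.exp_le_exp.2
      nlinarith
    have h2 : Real.exp (-L) = δ / 2 := by
      rw [hLdef, Real.exp_neg, Real.exp_log (by positivity)]
      field_simp
    linarith
  -- positive side
  have bound1 : (μ {ω | lam * σ ≤ Y ω}).toReal ≤ δ / 2 := by
    have h := tail_bound μ n X hmeas hindep C hC hbd hmean t (lam * σ) ht
    rw [← hVdef, hexpval] at h
    rw [hY]
    exact h.trans hhalf
  -- negative side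
  have bound2 : (μ {ω | lam * σ ≤ -Y ω}).toReal ≤ δ / 2 := by
    have hmeas' : ∀ i, Measurable (fun ω => -X i ω) := fun i => (hmeas i).neg
    have hindep' : iIndepFun (fun i ω => -X i ω) μ :=
      hindep.comp (fun _ x => -x) (fun _ => measurable_neg)
    have hbd' : ∀ i, ∀ᵐ ω ∂μ, |(fun ω => -X i ω) ω| ≤ C := by
      intro i; filter_upwards [hbd i] with ω hω; simpa using hω
    have hmean' : ∀ i, ∫ ω, (fun ω => -X i ω) ω ∂μ = 0 := by
      intro i
      show ∫ ω, -X i ω ∂μ = 0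
      rw [integral_neg, hmean i, neg_zero]
    have h := tail_bound μ n (fun i ω => -X i ω) hmeas' hindep' C hC hbd' hmean' t (lam * σ) ht
    simp only [neg_sq] at h
    rw [← hVdef, hexpval] at h
    have hset : {ω | lam * σ ≤ ∑ i, -X i ω} = {ω | lam * σ ≤ -Y ω} := by
      ext ω; rw [hY]; simp [Finset.sum_neg_distrib]
    rw [hset] at h
    exact h.trans hhalf
  -- combine
  have hsplit : {ω | lam * σ ≤ |Y ω|} ⊆ {ω | lam * σ ≤ Y ω} ∪ {ω | lam * σ ≤ -Y ω} := by
    intro ω hω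
    have hω' : lam * σ ≤ |Y ω| := hω
    rcases le_abs.1 hω' with h | h
    · exact Or.inl h
    · exact Or.inr h
  have hμ : μ {ω | lam * σ ≤ |Y ω|} ≤ μ {ω | lam * σ ≤ Y ω} + μ {ω | lam * σ ≤ -Y ω} :=
    (measure_mono hsplit).trans (measure_union_le _ _)
  calc (μ {ω | lam * σ ≤ |Y ω|}).toReal
      ≤ (μ {ω | lam * σ ≤ Y ω} + μ {ω | lam * σ ≤ -Y ω}).toReal := by
        apply ENNReal.toReal_mono _ hμ
        exact ENNReal.add_ne_top.2 ⟨measure_ne_top _ _, measure_ne_top _ _⟩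
    _ = (μ {ω | lam * σ ≤ Y ω}).toReal + (μ {ω | lam * σ ≤ -Y ω}).toReal :=
        ENNReal.toReal_add (measure_ne_top _ _) (measure_ne_top _ _)
    _ ≤ δ / 2 + δ / 2 := add_le_add bound1 bound2
    _ = δ := by ring
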